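/- arXiv:2012.13142 — 2 statements merged into one kernel-verified Lean document; each statement's English description precedes it below -/
import Mathlib

section
/- Lefschetz decomposition into primitive parts: under the stated hypotheses, for every integer a ≥ 0 the map N^s restricted to P^{−a−2s} is injective for every s ≥ 0, and H^{−a} is the internal direct sum H^{−a} = ⊕_{s ≥ 0} N^s(P^{−a−2s}). -/
namespace LefschetzDecomposition

variable (H : ℤ → Type) [∀ a, AddCommGroup (H a)] [∀ a, Module ℚ (H a)]

/-- Transport along an equality of indices. -/
def hcast {a b : ℤ} (h : a = b) : H a ≃ₗ[ℚ] H b := by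
  subst h; exact LinearEquiv.refl ℚ (H a)

variable (N : ∀ a : ℤ, H a →ₗ[ℚ] H (a + 2))

/-- The `n`-fold composite `N^n : H^a → H^{a + 2n}`. -/
noncomputable def Npow : (n : ℕ) → (a : ℤ) → (H a →ₗ[ℚ] H (a + 2 * n))
  | 0, a => (hcast H (by push_cast; ring)).toLinearMap
  | n + 1, a =>
      (hcast H (show a + 2 + 2 * (n : ℕ) = a + 2 * ((n : ℕ) + 1) by push_cast; ring)).toLinearMap
        ∘ₗ Npow n (a + 2) ∘ₗ N a

/-- The `a`-fold composite `N^a : H^{-a} → H^a`. -/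
noncomputable def Niter (a : ℕ) : H (-(a : ℤ)) →ₗ[ℚ] H (a : ℤ) :=
  (hcast H (show -(a : ℤ) + 2 * (a : ℕ) = (a : ℤ) by push_cast; ring)).toLinearMap
    ∘ₗ Npow H N a (-(a : ℤ))

/-- The primitive part in (nonpositive) degree `m`: for `m = -a` with `a ≥ 0` this is
`P^{-a} = ker (N^{a+1} : H^{-a} → H^{a+2})`. -/
noncomputable def Pprim (m : ℤ) : Submodule ℚ (H m) :=
  LinearMap.ker (Npow H N (m.natAbs + 1) m)

/-- The map `N^s : H^{-a-2s} → H^{-a}`. -/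
noncomputable def Nshift (a s : ℕ) : H (-(a : ℤ) - 2 * s) →ₗ[ℚ] H (-(a : ℤ)) :=
  (hcast H (show -(a : ℤ) - 2 * s + 2 * (s : ℕ) = -(a : ℤ) by push_cast; ring)).toLinearMap
    ∘ₗ Npow H N s (-(a : ℤ) - 2 * s)


-- toolkit
@[simp] lemma hcast_rfl (a : ℤ) (x : H a) : hcast H rfl x = x := rfl

lemma hcast_heq {a b : ℤ} (h : a = b) (x : H a) : HEq (hcast H h x) x := by subst h; rfl

@[simp] lemma hcast_self {a : ℤ} (h : a = a) (x : H a) : hcast H h x = x := rfl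

lemma hcast_hcast {a b c : ℤ} (h1 : a = b) (h2 : b = c) (x : H a) :
    hcast H h2 (hcast H h1 x) = hcast H (h1.trans h2) x := by subst h1; subst h2; rfl

lemma N_congr {a a' : ℤ} (h : a = a') {x : H a} {x' : H a'} (hx : HEq x x') :
    HEq (N a x) (N a' x') := by subst h; rw [eq_of_heq hx]

lemma Npow_congr {n n' : ℕ} (hn : n = n') {a a' : ℤ} (h : a = a') {x : H a} {x' : H a'}
    (hx : HEq x x') : HEq (Npow H N n a x) (Npow H N n' a' x') := by
  subst hn; subst h; rw [eq_of_heq hx]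

lemma eq_zero_of_heq {i j : ℤ} (h : i = j) {x : H i} {y : H j} (hxy : HEq x y) (hy : y = 0) :
    x = 0 := by subst h; rw [eq_of_heq hxy, hy]

lemma hcast_eq_of_heq {i j : ℤ} (h : i = j) {x : H i} {y : H j} (hxy : HEq x y) :
    hcast H h x = y := by subst h; exact eq_of_heq hxy

lemma Npow_zero_heq (a : ℤ) (x : H a) : HEq (Npow H N 0 a x) x := hcast_heq H _ x

lemma Npow_succ_heq (n : ℕ) (a : ℤ) (x : H a) :
    HEq (Npow H N (n + 1) a x) (Npow H N n (a + 2) (N a x)) := hcast_heq H _ _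


end LefschetzDecomposition
namespace LefschetzDecomposition
variable (H : ℤ → Type) [∀ a, AddCommGroup (H a)] [∀ a, Module ℚ (H a)]
variable (N : ∀ a : ℤ, H a →ₗ[ℚ] H (a + 2))

/-- N commutes past Npow. -/
lemma Npow_comm : ∀ (m : ℕ) (a : ℤ) (x : H a),
    HEq (Npow H N m (a + 2) (N a x)) (N (a + 2 * m) (Npow H N m a x))
  | 0, a, x => by
      refine ((Npow_zero_heq H N _ _).trans ?_).trans
        (N_congr H N (by push_cast; ring) ((Npow_zero_heq H N a x).symm))
      rfl
  | m + 1, a, x => by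
      refine (Npow_succ_heq H N m (a + 2) (N a x)).trans ?_
      refine (Npow_congr H N rfl (by ring) (N_congr H N (by ring) (HEq.refl _))).trans ?_
      refine (Npow_comm m (a + 2) (N a x)).trans ?_
      exact N_congr H N (by push_cast; ring) ((Npow_succ_heq H N m a x).symm)

/-- Additivity of Npow. -/
lemma Npow_add : ∀ (n : ℕ) (m : ℕ) (a : ℤ) (x : H a),
    HEq (Npow H N (m + n) a x) (Npow H N n (a + 2 * m) (Npow H N m a x))
  | 0, m, a, x => (Npow_zero_heq H N _ _).symm
  | n + 1, m, a, x => by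
      show HEq (Npow H N ((m + n) + 1) a x) _
      refine (Npow_succ_heq H N (m + n) a x).trans ?_
      refine (Npow_add n m (a + 2) (N a x)).trans ?_
      exact ((Npow_succ_heq H N n (a + 2 * m) _).trans
        (Npow_congr H N rfl (by push_cast; ring) (Npow_comm H N m a x).symm)).symm

lemma eq_zero_iff_of_heq {i j : ℤ} (h : i = j) {x : H i} {y : H j} (hxy : HEq x y) :
    x = 0 ↔ y = 0 := by subst h; rw [eq_of_heq hxy]

lemma Nshift_heq (a s : ℕ) (x : H (-(a : ℤ) - 2 * s)) :
    HEq (Nshift H N a s x) (Npow H N s (-(a : ℤ) - 2 * s) x) := hcast_heq H _ _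

lemma Niter_heq (a : ℕ) (x : H (-(a : ℤ))) :
    HEq (Niter H N a x) (Npow H N a (-(a : ℤ)) x) := hcast_heq H _ _

lemma mem_Pprim_iff (a s : ℕ) (x : H (-(a : ℤ) - 2 * s)) :
    x ∈ Pprim H N (-(a : ℤ) - 2 * s) ↔ Npow H N (a + 2 * s + 1) (-(a : ℤ) - 2 * s) x = 0 := by
  have hn : (-(a : ℤ) - 2 * s).natAbs + 1 = a + 2 * s + 1 := by omega
  exact (eq_zero_iff_of_heq H (by rw [hn]) (Npow_congr H N hn rfl (HEq.refl x)))

lemma Nshift_eq_zero (hHL : ∀ a : ℕ, Function.Bijective (Niter H N a)) (a s : ℕ)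
    (x : H (-(a : ℤ) - 2 * s)) (hx : Nshift H N a s x = 0) : x = 0 := by
  set a0 : ℤ := -((a + 2 * s : ℕ) : ℤ) with ha0
  have h1 : -(a : ℤ) - 2 * s = a0 := by push_cast [ha0]; ring
  set x' : H a0 := hcast H h1 x with hx'def
  have hx' : HEq x' x := hcast_heq H h1 x
  -- step 1 : Npow s a0 x' = 0
  have s1 : Npow H N s a0 x' = 0 := by
    refine eq_zero_of_heq H (show a0 + 2 * (s : ℕ) = -(a : ℤ) by push_cast [ha0]; ring)
      (HEq.trans (Npow_congr H N rfl h1.symm hx') (Nshift_heq H N a s x).symm) hx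
  -- step 2 : Npow (a + 2s) a0 x' = 0
  have s2 : Npow H N (a + 2 * s) a0 x' = 0 := by
    refine eq_zero_of_heq H (show a0 + 2 * ((a + 2 * s : ℕ) : ℤ) = a0 + 2 * (s : ℕ) + 2 * ((a + s : ℕ) : ℤ) by push_cast; ring)
      ((Npow_congr H N (show a + 2 * s = s + (a + s) by omega) rfl (HEq.refl x')).trans
        (Npow_add H N (a + s) s a0 x')) ?_
    rw [s1, map_zero]
  have s3 : Niter H N (a + 2 * s) x' = 0 :=
    eq_zero_of_heq H (show (((a + 2 * s : ℕ)) : ℤ) = a0 + 2 * ((a + 2 * s : ℕ) : ℤ) by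
      rw [ha0]; ring) (Niter_heq H N (a + 2 * s) x') s2
  have : x' = 0 := by
    have := (hHL (a + 2 * s)).1
    apply this; rw [s3, map_zero]
  have : hcast H h1 x = 0 := this
  simpa using congrArg (hcast H h1).symm this

lemma Nshift_injective (hHL : ∀ a : ℕ, Function.Bijective (Niter H N a)) (a s : ℕ) :
    Function.Injective (Nshift H N a s) := by
  intro x y h
  have : Nshift H N a s (x - y) = 0 := by rw [map_sub, h, sub_self]
  have := Nshift_eq_zero H N hHL a s _ this
  exact sub_eq_zero.mp this

/-- The submodule `N^s(P^{-a-2s})` of `H^{-a}`. -/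
noncomputable def Qsub (a s : ℕ) : Submodule ℚ (H (-(a : ℤ))) :=
  (Pprim H N (-(a : ℤ) - 2 * s)).map (Nshift H N a s)

/-- The map `N : H^{-(a+2)} → H^{-a}`. -/
noncomputable def phi (a : ℕ) : H (-((a + 2 : ℕ) : ℤ)) →ₗ[ℚ] H (-(a : ℤ)) :=
  Nshift H N a 1 ∘ₗ
    (hcast H (show -((a + 2 : ℕ) : ℤ) = -(a : ℤ) - 2 * ((1 : ℕ) : ℤ) by push_cast; ring)).toLinearMap

lemma phi_heq (a : ℕ) (y : H (-((a + 2 : ℕ) : ℤ))) :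
    HEq (phi H N a y) (Npow H N 1 (-((a + 2 : ℕ) : ℤ)) y) := by
  refine (Nshift_heq H N a 1 _).trans ?_
  exact Npow_congr H N rfl (by push_cast; ring) (hcast_heq H _ y)

lemma mem_Qsub_zero_iff (a : ℕ) (x : H (-(a : ℤ))) :
    x ∈ Qsub H N a 0 ↔ Npow H N (a + 1) (-(a : ℤ)) x = 0 := by
  rw [Qsub]
  simp only [Submodule.mem_map]
  constructor
  · rintro ⟨z, hz, rfl⟩
    rw [mem_Pprim_iff] at hz
    refine eq_zero_of_heq H (show -(a : ℤ) + 2 * ((a+1 : ℕ) : ℤ) =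
        -(a : ℤ) - 2 * ((0:ℕ) : ℤ) + 2 * ((a + 2*0 + 1 : ℕ) : ℤ) by push_cast; ring)
      (Npow_congr H N (by omega) (by push_cast; ring)
        ((Nshift_heq H N a 0 z).trans (Npow_zero_heq H N _ z))) hz
  · intro hx
    have he : -(a : ℤ) = -(a : ℤ) - 2 * ((0:ℕ) : ℤ) := by push_cast; ring
    refine ⟨hcast H he x, ?_, ?_⟩
    · rw [mem_Pprim_iff]
      refine eq_zero_of_heq H (show -(a : ℤ) - 2 * ((0:ℕ) : ℤ) + 2 * ((a + 2*0 + 1 : ℕ) : ℤ) =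
          -(a : ℤ) + 2 * ((a+1 : ℕ) : ℤ) by push_cast; ring)
        (Npow_congr H N (by omega) he.symm (hcast_heq H he x)) hx
    · exact eq_of_heq (((Nshift_heq H N a 0 _).trans (Npow_zero_heq H N _ _)).trans
        (hcast_heq H he x))

lemma phi_Npow (a : ℕ) (y : H (-((a + 2 : ℕ) : ℤ))) :
    HEq (Npow H N (a + 1) (-(a : ℤ)) (phi H N a y))
      (Npow H N (a + 2) (-((a + 2 : ℕ) : ℤ)) y) := by
  refine HEq.symm ?_
  refine (Npow_congr H N (show a + 2 = 1 + (a + 1) by omega) rfl (HEq.refl y)).trans ?_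
  refine (Npow_add H N (a + 1) 1 (-((a + 2 : ℕ) : ℤ)) y).trans ?_
  exact Npow_congr H N rfl (by push_cast; ring) (phi_heq H N a y).symm

lemma phi_injective (hHL : ∀ a : ℕ, Function.Bijective (Niter H N a)) (a : ℕ) :
    Function.Injective (phi H N a) := by
  intro x y h
  have := Nshift_injective H N hHL a 1 h
  exact (hcast H _).injective this

lemma disjoint_Qsub_zero_phi (hHL : ∀ a : ℕ, Function.Bijective (Niter H N a)) (a : ℕ)
    (x : H (-(a : ℤ))) (hx : x ∈ Qsub H N a 0) (y : H (-((a + 2 : ℕ) : ℤ)))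
    (hy : phi H N a y = x) : x = 0 := by
  rw [mem_Qsub_zero_iff] at hx
  have h2 : Npow H N (a + 2) (-((a + 2 : ℕ) : ℤ)) y = 0 := by
    refine eq_zero_of_heq H (show -((a + 2 : ℕ) : ℤ) + 2 * ((a + 2 : ℕ) : ℤ) =
        -(a : ℤ) + 2 * ((a + 1 : ℕ) : ℤ) by push_cast; ring)
      ((phi_Npow H N a y).symm.trans ?_) hx
    rw [hy]
  have h3 : Niter H N (a + 2) y = 0 := by
    refine eq_zero_of_heq H (show ((a + 2 : ℕ) : ℤ) =
        -((a + 2 : ℕ) : ℤ) + 2 * ((a + 2 : ℕ) : ℤ) by ring) (Niter_heq H N (a + 2) y) h2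
  have hy0 : y = 0 := by
    apply (hHL (a + 2)).1; rw [h3, map_zero]
  rw [← hy, hy0, map_zero]

lemma exists_split (hHL : ∀ a : ℕ, Function.Bijective (Niter H N a)) (a : ℕ)
    (x : H (-(a : ℤ))) : ∃ y, x - phi H N a y ∈ Qsub H N a 0 := by
  have hidx : -(a : ℤ) + 2 * ((a + 1 : ℕ) : ℤ) = ((a + 2 : ℕ) : ℤ) := by push_cast; ring
  obtain ⟨y, hy⟩ := (hHL (a + 2)).2 (hcast H hidx (Npow H N (a + 1) (-(a : ℤ)) x))
  refine ⟨y, ?_⟩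
  rw [mem_Qsub_zero_iff]
  have key : Npow H N (a + 1) (-(a : ℤ)) (phi H N a y) = Npow H N (a + 1) (-(a : ℤ)) x := by
    refine eq_of_heq ((phi_Npow H N a y).trans ?_)
    have h1 : HEq (Niter H N (a + 2) y) (Npow H N (a + 2) (-((a + 2 : ℕ) : ℤ)) y) :=
      Niter_heq H N (a + 2) y
    have h2 : HEq (Niter H N (a + 2) y) (Npow H N (a + 1) (-(a : ℤ)) x) := by
      rw [hy]; exact hcast_heq H hidx _
    exact h1.symm.trans h2
  rw [map_sub, key, sub_self]

lemma Qsub_succ (a s : ℕ) : Qsub H N a (s + 1) = (Qsub H N (a + 2) s).map (phi H N a) := by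
  have he : -((a + 2 : ℕ) : ℤ) - 2 * (s : ℕ) = -(a : ℤ) - 2 * ((s + 1 : ℕ) : ℤ) := by
    push_cast; ring
  have hmap : ∀ w : H (-((a + 2 : ℕ) : ℤ) - 2 * (s : ℕ)),
      Nshift H N a (s + 1) (hcast H he w) = phi H N a (Nshift H N (a + 2) s w) := by
    intro w
    refine eq_of_heq ?_
    refine (Nshift_heq H N a (s + 1) _).trans ?_
    refine (Npow_congr H N rfl he.symm (hcast_heq H he w)).trans ?_
    refine (Npow_add H N 1 s _ w).trans ?_
    refine (Npow_congr H N rfl (show -((a + 2 : ℕ) : ℤ) - 2 * (s : ℕ) + 2 * (s : ℕ) =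
        -((a + 2 : ℕ) : ℤ) by ring) (Nshift_heq H N (a + 2) s w).symm).trans ?_
    exact (phi_heq H N a (Nshift H N (a + 2) s w)).symm
  have hP : ∀ w : H (-((a + 2 : ℕ) : ℤ) - 2 * (s : ℕ)),
      w ∈ Pprim H N (-((a + 2 : ℕ) : ℤ) - 2 * (s : ℕ)) ↔
      hcast H he w ∈ Pprim H N (-(a : ℤ) - 2 * ((s + 1 : ℕ) : ℤ)) := by
    intro w
    rw [mem_Pprim_iff, mem_Pprim_iff]
    exact eq_zero_iff_of_heq H (by rw [he]; norm_num; push_cast; ring)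
      (Npow_congr H N (by omega) he (hcast_heq H he w).symm)
  ext x
  simp only [Qsub, Submodule.mem_map]
  constructor
  · rintro ⟨z, hz, rfl⟩
    have hzw : hcast H he (hcast H he.symm z) = z := by rw [hcast_hcast]; exact hcast_self H _ z
    refine ⟨Nshift H N (a + 2) s (hcast H he.symm z), ⟨hcast H he.symm z, ?_, rfl⟩, ?_⟩
    · rw [hP, hzw]; exact hz
    · rw [← hmap, hzw]
  · rintro ⟨w', ⟨w, hw, rfl⟩, rfl⟩
    exact ⟨hcast H he w, (hP w).mp hw, hmap w⟩


lemma internal_aux (hHL : ∀ a : ℕ, Function.Bijective (Niter H N a)) (n : ℕ)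
    (hn : ∀ a : ℤ, (n : ℤ) ≤ |a| → ∀ x : H a, x = 0) :
    ∀ (k a : ℕ), n ≤ a + 2 * k →
      iSupIndep (Qsub H N a) ∧ iSup (Qsub H N a) = ⊤ := by
  intro k
  induction k with
  | zero =>
    intro a ha
    have hz : ∀ x : H (-(a : ℤ)), x = 0 := fun x =>
      hn _ (by rw [abs_neg, Int.abs_natCast]; exact_mod_cast (by omega : n ≤ a)) x
    constructor
    · intro s
      exact Submodule.disjoint_def.mpr fun x _ _ => hz x
    · rw [eq_top_iff]
      intro x _
      rw [hz x]
      exact zero_mem _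
  | succ k ih =>
    intro a ha
    obtain ⟨hind', hsup'⟩ := ih (a + 2) (by omega)
    have hφ := phi_injective H N hHL a
    have hd0 : Disjoint (Qsub H N a 0) (LinearMap.range (phi H N a)) :=
      Submodule.disjoint_def.mpr fun x hx hx' => by
        obtain ⟨y, hy⟩ := hx'
        exact disjoint_Qsub_zero_phi H N hHL a x hx y hy
    have hrange : LinearMap.range (phi H N a) = ⨆ s, Qsub H N a (s + 1) := by
      rw [← Submodule.map_top, ← hsup', Submodule.map_iSup]
      exact iSup_congr fun s => (Qsub_succ H N a s).symm
    constructor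
    · intro s
      match s with
      | 0 =>
        refine Disjoint.mono_right ?_ hd0
        refine iSup₂_le fun t ht => ?_
        match t with
        | 0 => exact absurd rfl ht
        | t + 1 =>
          rw [Qsub_succ]
          exact LinearMap.map_le_range
      | s + 1 =>
        have hle : (⨆ t, ⨆ _ : t ≠ s + 1, Qsub H N a t) ≤
            Qsub H N a 0 ⊔ Submodule.map (phi H N a) (⨆ t, ⨆ _ : t ≠ s, Qsub H N (a + 2) t) := by
          refine iSup₂_le fun t ht => ?_
          match t with
          | 0 => exact le_sup_left
          | t + 1 =>
            refine le_trans ?_ le_sup_right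
            rw [Qsub_succ]
            refine Submodule.map_mono (le_iSup₂ (f := fun t (_ : t ≠ s) => Qsub H N (a + 2) t) t
              (fun h => ht (congrArg Nat.succ h)))
        refine Submodule.disjoint_def.mpr fun x hx hx' => ?_
        have hx2 := hle hx'
        rw [Qsub_succ] at hx
        obtain ⟨y, hy, rfl⟩ := hx
        rw [Submodule.mem_sup] at hx2
        obtain ⟨p, hp, w', hw', hsum⟩ := hx2
        obtain ⟨z, hz, rfl⟩ := hw'
        have hpφ : p = phi H N a (y - z) := by
          rw [map_sub]
          exact eq_sub_of_add_eq hsum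
        have hp0 : p = 0 := disjoint_Qsub_zero_phi H N hHL a p hp (y - z) hpφ.symm
        have hyz : y = z := hφ (by rw [← hsum, hp0, zero_add])
        have hy0 : y = 0 := Submodule.disjoint_def.mp (hind' s) y hy (hyz ▸ hz)
        rw [hy0, map_zero]
    · rw [eq_top_iff]
      intro x _
      obtain ⟨y, hy⟩ := exists_split H N hHL a x
      have h1 : x - phi H N a y ∈ ⨆ s, Qsub H N a s := Submodule.mem_iSup_of_mem 0 hy
      have h2 : phi H N a y ∈ ⨆ s, Qsub H N a s := by
        have hm : phi H N a y ∈ LinearMap.range (phi H N a) := ⟨y, rfl⟩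
        rw [hrange] at hm
        exact (iSup_le fun s => le_iSup (Qsub H N a) (s + 1) :
          (⨆ s, Qsub H N a (s + 1)) ≤ ⨆ s, Qsub H N a s) hm
      simpa using add_mem h1 h2

end LefschetzDecomposition

open LefschetzDecomposition in
/-- **Lefschetz decomposition into primitive parts.**  Let `(H^a)` be a bounded family of
finite-dimensional `ℚ`-vector spaces with maps `N : H^a → H^{a+2}` satisfying hard Lefschetz
(`N^a : H^{-a} → H^a` is an isomorphism for every `a ≥ 0`).  Then for every `a ≥ 0`, the map
`N^s` is injective on the primitive part `P^{-a-2s} = ker N^{a+2s+1}` for every `s ≥ 0`, and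
`H^{-a}` is the internal direct sum `⊕_{s ≥ 0} N^s (P^{-a-2s})`. -/
theorem lefschetz_primitive_decomposition
    (H : ℤ → Type) [∀ a, AddCommGroup (H a)] [∀ a, Module ℚ (H a)]
    [∀ a, FiniteDimensional ℚ (H a)]
    (hbdd : ∃ n : ℕ, ∀ a : ℤ, (n : ℤ) ≤ |a| → ∀ x : H a, x = 0)
    (N : ∀ a : ℤ, H a →ₗ[ℚ] H (a + 2))
    (hHL : ∀ a : ℕ, Function.Bijective (Niter H N a)) :
    ∀ a : ℕ,
      (∀ s : ℕ, Set.InjOn (Nshift H N a s) (Pprim H N (-(a : ℤ) - 2 * s))) ∧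
      DirectSum.IsInternal
        (fun s : ℕ => (Pprim H N (-(a : ℤ) - 2 * s)).map (Nshift H N a s)) := by
  intro a
  constructor
  · exact fun s => (Nshift_injective H N hHL a s).injOn
  · obtain ⟨n, hn⟩ := hbdd
    exact (DirectSum.isInternal_submodule_iff_iSupIndep_and_iSup_eq_top _).mpr
      (internal_aux H N hHL n hn n a (by omega))
end

section
/- Duality between the kernels: under the stated hypotheses, ker(N_V) is ψ-orthogonal to im(M_W), ker(N_W) is ψ-orthogonal to im(M_V), and the restriction of ψ to ker(N_V) × ker(N_W) is a nondegenerate bilinear pairing. -/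
/-- **Duality between the kernels.**  Let `V, V', V'', W, W', W''` be finite-dimensional
`ℚ`-vector spaces with nondegenerate bilinear pairings `ψ : V × W → ℚ`, `ψ' : V' × W'' → ℚ`,
`ψ'' : V'' × W' → ℚ`, and linear maps `N_V : V → V'`, `M_V : V'' → V`, `N_W : W → W'`,
`M_W : W'' → W` satisfying the adjunction identities `ψ(M_V x, y) = -ψ''(x, N_W y)` and
`ψ'(N_V x, z) = -ψ(x, M_W z)`.  If `V = ker N_V ⊕ im M_V` and `W = ker N_W ⊕ im M_W`, then
`ker N_V` is `ψ`-orthogonal to `im M_W`, `ker N_W` is `ψ`-orthogonal to `im M_V`, and the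
restriction of `ψ` to `ker N_V × ker N_W` is a nondegenerate pairing. -/
theorem kernel_duality
    (V V' V'' W W' W'' : Type)
    [AddCommGroup V] [Module ℚ V] [FiniteDimensional ℚ V]
    [AddCommGroup V'] [Module ℚ V'] [FiniteDimensional ℚ V']
    [AddCommGroup V''] [Module ℚ V''] [FiniteDimensional ℚ V'']
    [AddCommGroup W] [Module ℚ W] [FiniteDimensional ℚ W]
    [AddCommGroup W'] [Module ℚ W'] [FiniteDimensional ℚ W']
    [AddCommGroup W''] [Module ℚ W''] [FiniteDimensional ℚ W'']
    (ψ : V →ₗ[ℚ] W →ₗ[ℚ] ℚ) (ψ' : V' →ₗ[ℚ] W'' →ₗ[ℚ] ℚ) (ψ'' : V'' →ₗ[ℚ] W' →ₗ[ℚ] ℚ)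
    (hψl : ∀ x : V, (∀ y : W, ψ x y = 0) → x = 0)
    (hψr : ∀ y : W, (∀ x : V, ψ x y = 0) → y = 0)
    (hψ'l : ∀ x : V', (∀ z : W'', ψ' x z = 0) → x = 0)
    (hψ'r : ∀ z : W'', (∀ x : V', ψ' x z = 0) → z = 0)
    (hψ''l : ∀ x : V'', (∀ y : W', ψ'' x y = 0) → x = 0)
    (hψ''r : ∀ y : W', (∀ x : V'', ψ'' x y = 0) → y = 0)
    (NV : V →ₗ[ℚ] V') (MV : V'' →ₗ[ℚ] V) (NW : W →ₗ[ℚ] W') (MW : W'' →ₗ[ℚ] W)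
    (hadj1 : ∀ (x : V'') (y : W), ψ (MV x) y = - ψ'' x (NW y))
    (hadj2 : ∀ (x : V) (z : W''), ψ' (NV x) z = - ψ x (MW z))
    (hdecV : IsCompl (LinearMap.ker NV) (LinearMap.range MV))
    (hdecW : IsCompl (LinearMap.ker NW) (LinearMap.range MW)) :
    (∀ x ∈ LinearMap.ker NV, ∀ y ∈ LinearMap.range MW, ψ x y = 0) ∧
    (∀ y ∈ LinearMap.ker NW, ∀ x ∈ LinearMap.range MV, ψ x y = 0) ∧
    (∀ x ∈ LinearMap.ker NV, (∀ y ∈ LinearMap.ker NW, ψ x y = 0) → x = 0) ∧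
    (∀ y ∈ LinearMap.ker NW, (∀ x ∈ LinearMap.ker NV, ψ x y = 0) → y = 0) := by
  have h1 : ∀ x ∈ LinearMap.ker NV, ∀ y ∈ LinearMap.range MW, ψ x y = 0 := by
    rintro x hx y ⟨z, rfl⟩
    have := hadj2 x z
    rw [LinearMap.mem_ker.mp hx] at this
    simp at this
    linarith
  have h2 : ∀ y ∈ LinearMap.ker NW, ∀ x ∈ LinearMap.range MV, ψ x y = 0 := by
    rintro y hy x ⟨u, rfl⟩
    rw [hadj1, LinearMap.mem_ker.mp hy]
    simp
  refine ⟨h1, h2, ?_, ?_⟩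
  · intro x hx h
    apply hψl
    intro y
    obtain ⟨k, m, hk, hm, rfl⟩ := Submodule.codisjoint_iff_exists_add_eq.mp hdecW.codisjoint y
    rw [map_add, h k hk, h1 x hx m hm, add_zero]
  · intro y hy h
    apply hψr
    intro x
    obtain ⟨k, m, hk, hm, rfl⟩ := Submodule.codisjoint_iff_exists_add_eq.mp hdecV.codisjoint x
    rw [map_add, LinearMap.add_apply, h k hk, h2 y hy m hm, add_zero]
end
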